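/- Combining the two marginal-cost monotonicity conclusions with the single-crossing lemma: if χ is C², strictly convex with χ_νΔ > 0, and points (ν_t,Δ_t), (ν_{t+1},Δ_{t+1}) satisfy χ_ν(ν_{t+1},Δ_{t+1}) > χ_ν(ν_t,Δ_t) and χ_Δ(ν_{t+1},Δ_{t+1}) < χ_Δ(ν_t,Δ_t), then ν_{t+1} > ν_t and Δ_{t+1} < Δ_t. -/

import Mathlib

open Set Filter Topology

section Aux

variable {D : Set (ℝ × ℝ)} {χ : ℝ × ℝ → ℝ}

private lemma aux_diff (hD : IsOpen D) (hχ : ContDiffOn ℝ 2 χ D) :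
    ∀ p ∈ D, DifferentiableAt ℝ χ p := fun p hp =>
  ((hχ.differentiableOn (by norm_num)).differentiableAt (hD.mem_nhds hp))

private lemma aux_diff' (hD : IsOpen D) (hχ : ContDiffOn ℝ 2 χ D) :
    ∀ p ∈ D, DifferentiableAt ℝ (fderiv ℝ χ) p := by
  intro p hp
  have h1 : ContDiffOn ℝ 1 (fderiv ℝ χ) D := hχ.fderiv_of_isOpen hD (by norm_num)
  exact (h1.differentiableOn (by norm_num)).differentiableAt (hD.mem_nhds hp)

/-- Strict monotonicity of the gradient of a strictly convex C² function. -/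
private lemma aux_grad_mono (hD : IsOpen D) (hDc : Convex ℝ D)
    (hχ : ContDiffOn ℝ 2 χ D) (hconv : StrictConvexOn ℝ D χ) :
    ∀ p ∈ D, ∀ q ∈ D, p ≠ q → fderiv ℝ χ p (q - p) < fderiv ℝ χ q (q - p) := by
  intro p hp q hq hpq
  set w : ℝ × ℝ := q - p with hw
  have hwne : w ≠ 0 := sub_ne_zero.2 (Ne.symm hpq)
  set L : ℝ → ℝ × ℝ := fun t => p + t • w with hLdef
  have hL0 : L 0 = p := by simp [hLdef]
  have hL1 : L 1 = q := by simp [hLdef, hw]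
  have hLaff : ∀ (a b x y : ℝ), a + b = 1 → L (a * x + b * y) = a • L x + b • L y := by
    intro a b x y hab
    simp only [hLdef]
    have h1 : p = a • p + b • p := by rw [← add_smul, hab, one_smul]
    calc p + (a * x + b * y) • w = (a • p + b • p) + (a * x + b * y) • w := by rw [← h1]
      _ = a • (p + x • w) + b • (p + y • w) := by module
  have hLinj : Function.Injective L := by
    intro s t hst
    simp only [hLdef, add_right_inj] at hst
    have h2 : (s - t) • w = 0 := by rw [sub_smul, hst, sub_self]
    rcases smul_eq_zero.1 h2 with h | h
    · linarith [sub_eq_zero.1 h]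
    · exact absurd h hwne
  have hS : Convex ℝ (L ⁻¹' D) := by
    intro x hx y hy a b ha hb hab
    show L (a • x + b • y) ∈ D
    rw [smul_eq_mul, smul_eq_mul, hLaff a b x y hab]
    exact hDc hx hy ha hb hab
  have hφ : StrictConvexOn ℝ (L ⁻¹' D) (χ ∘ L) := by
    refine ⟨hS, ?_⟩
    intro x hx y hy hxy a b ha hb hab
    simp only [Function.comp_apply, smul_eq_mul]
    rw [hLaff a b x y hab]
    simpa using hconv.2 hx hy (fun h => hxy (hLinj h)) ha hb hab
  have hLd : ∀ t : ℝ, HasDerivAt L w t := by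
    intro t
    simpa [hLdef] using ((hasDerivAt_id t).smul_const w).const_add p
  have hφd : ∀ t, t ∈ L ⁻¹' D → HasDerivAt (χ ∘ L) (fderiv ℝ χ (L t) w) t := fun t ht =>
    (aux_diff hD hχ _ ht).hasFDerivAt.comp_hasDerivAt t (hLd t)
  have h0 : (0 : ℝ) ∈ L ⁻¹' D := by simp only [mem_preimage, hL0]; exact hp
  have h1 : (1 : ℝ) ∈ L ⁻¹' D := by simp only [mem_preimage, hL1]; exact hq
  have hmono := hφ.strictMonoOn_deriv (fun t ht => (hφd t ht).differentiableAt) h0 h1 zero_lt_one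
  rwa [(hφd 0 h0).deriv, (hφd 1 h1).deriv, hL0, hL1] at hmono

/-- Nonnegativity of the diagonal second derivatives of a strictly convex C² function. -/
private lemma aux_Hdiag (hD : IsOpen D) (hDc : Convex ℝ D)
    (hχ : ContDiffOn ℝ 2 χ D) (hconv : StrictConvexOn ℝ D χ)
    (w : ℝ × ℝ) {p : ℝ × ℝ} (hp : p ∈ D) :
    0 ≤ fderiv ℝ (fun q => fderiv ℝ χ q w) p w := by
  by_cases hw : w = 0
  · simp [hw]
  have hFd : ∀ x ∈ D, DifferentiableAt ℝ (fun q => fderiv ℝ χ q w) x := fun x hx =>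
    (aux_diff' hD hχ x hx).clm_apply (differentiableAt_const w)
  set F : ℝ × ℝ → ℝ := fun q => fderiv ℝ χ q w with hF
  set g : ℝ → ℝ := fun t => F (p + t • w) with hg
  have hLd : ∀ t : ℝ, HasDerivAt (fun s : ℝ => p + s • w) w t := by
    intro t
    simpa using ((hasDerivAt_id t).smul_const w).const_add p
  have hgd : HasDerivAt g (fderiv ℝ F p w) 0 := by
    have key : HasDerivAt (fun t : ℝ => F (p + t • w))
        ((fderiv ℝ F (p + (0:ℝ) • w)) w) 0 :=
      (hFd _ (by simpa using hp)).hasFDerivAt.comp_hasDerivAt 0 (hLd 0)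
    simpa [hg] using key
  have htend : Tendsto (slope g 0) (𝓝[>] 0) (𝓝 (fderiv ℝ F p w)) := by
    refine (hasDerivAt_iff_tendsto_slope.1 hgd).mono_left (nhdsWithin_mono 0 ?_)
    intro t ht
    simp only [mem_compl_iff, mem_singleton_iff]
    exact ne_of_gt ht
  have hev : ∀ᶠ t in 𝓝[>] (0:ℝ), 0 ≤ slope g 0 t := by
    have hcont : ContinuousAt (fun t : ℝ => p + t • w) 0 := by
      exact (continuous_const.add (continuous_id.smul continuous_const)).continuousAt
    have hmem : ∀ᶠ t in 𝓝 (0:ℝ), p + t • w ∈ D := by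
      have h1 : (fun t : ℝ => p + t • w) ⁻¹' D ∈ 𝓝 (0:ℝ) :=
        hcont.preimage_mem_nhds (by simpa using hD.mem_nhds hp)
      exact h1
    filter_upwards [eventually_nhdsWithin_of_eventually_nhds hmem, self_mem_nhdsWithin]
      with t htD ht
    have htpos : (0:ℝ) < t := ht
    have hne : p ≠ p + t • w := by
      intro h
      have h2 : t • w = 0 := left_eq_add.1 h
      rcases smul_eq_zero.1 h2 with h' | h'
      · exact (ne_of_gt htpos) h'
      · exact hw h'
    have hlt := aux_grad_mono hD hDc hχ hconv p hp _ htD hne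
    rw [add_sub_cancel_left] at hlt
    rw [map_smul, map_smul] at hlt
    simp only [smul_eq_mul] at hlt
    have hFlt : F p < F (p + t • w) := (mul_lt_mul_iff_right₀ htpos).1 hlt
    have h0 : g 0 = F p := by simp [hg]
    have h3 : 0 ≤ (g t - g 0) / (t - 0) := by
      apply div_nonneg
      · rw [h0]; simp only [hg]; linarith
      · linarith
    simpa [slope_def_field] using h3
  exact ge_of_tendsto htend hev

/-- Symmetry of the second derivative. -/
private lemma aux_symm (hD : IsOpen D) (hχ : ContDiffOn ℝ 2 χ D)
    {p : ℝ × ℝ} (hp : p ∈ D) (v w : ℝ × ℝ) :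
    fderiv ℝ (fun q => fderiv ℝ χ q w) p v = fderiv ℝ (fun q => fderiv ℝ χ q v) p w := by
  have hd' := aux_diff' hD hχ p hp
  have hev : ∀ᶠ y in 𝓝 p, HasFDerivAt χ (fderiv ℝ χ y) y :=
    (hD.eventually_mem hp).mono fun y hy => (aux_diff hD hχ y hy).hasFDerivAt
  have hsymm := second_derivative_symmetric_of_eventually hev hd'.hasFDerivAt v w
  have e1 : fderiv ℝ (fun q => fderiv ℝ χ q w) p = (fderiv ℝ (fderiv ℝ χ) p).flip w := by
    have h := fderiv_clm_apply (c := fderiv ℝ χ) (u := fun _ => w) hd' (differentiableAt_const w)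
    simpa using h
  have e2 : fderiv ℝ (fun q => fderiv ℝ χ q v) p = (fderiv ℝ (fderiv ℝ χ) p).flip v := by
    have h := fderiv_clm_apply (c := fderiv ℝ χ) (u := fun _ => v) hd' (differentiableAt_const v)
    simpa using h
  rw [e1, e2]
  exact hsymm

/-- The final arithmetic case analysis. -/
private lemma aux_final {a b Δf Δg h11 h12 h21 h22 : ℝ} (hΔf : 0 < Δf) (hΔg : Δg < 0)
    (hM : 0 < a * Δf + b * Δg) (hF : Δf = a * h11 + b * h12) (hG : Δg = a * h21 + b * h22)
    (h11n : 0 ≤ h11) (h12p : 0 < h12) (h21p : 0 < h21) (h22n : 0 ≤ h22) :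
    0 < a ∧ b < 0 := by
  constructor
  · by_contra ha
    push_neg at ha
    rcases le_or_gt b 0 with hb | hb
    · nlinarith
    · nlinarith
  · by_contra hb
    push_neg at hb
    rcases le_or_gt 0 a with haa | haa
    · nlinarith
    · nlinarith

end Aux

/-- Lemma A.5 applied in Proposition 4: combining strict monotonicity of the
marginal costs with the single-crossing property of a supermodular strictly
convex C² cost function yields strictly increasing flow utilities and strictly
decreasing distortions. -/
theorem monotone_dynamics_from_marginal_costs
    (D : Set (ℝ × ℝ)) (hD : IsOpen D) (hDc : Convex ℝ D)
    (χ : ℝ × ℝ → ℝ) (hχ : ContDiffOn ℝ 2 χ D)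
    (hconv : StrictConvexOn ℝ D χ)
    (hcross : ∀ p ∈ D, 0 < fderiv ℝ (fun q => fderiv ℝ χ q (1, 0)) p (0, 1))
    (pt pt1 : ℝ × ℝ) (hpt : pt ∈ D) (hpt1 : pt1 ∈ D)
    (hν : fderiv ℝ χ pt (1, 0) < fderiv ℝ χ pt1 (1, 0))
    (hΔ : fderiv ℝ χ pt1 (0, 1) < fderiv ℝ χ pt (0, 1)) :
    pt.1 < pt1.1 ∧ pt1.2 < pt.2 := by
  have hd' := aux_diff' hD hχ
  -- decomposition of CLM applications
  have hdec : ∀ (T : (ℝ × ℝ) →L[ℝ] ℝ) (u : ℝ × ℝ),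
      T u = u.1 * T (1, 0) + u.2 * T (0, 1) := by
    intro T u
    have hu : u = u.1 • ((1:ℝ), (0:ℝ)) + u.2 • ((0:ℝ), (1:ℝ)) := by
      apply Prod.ext <;> simp
    conv_lhs => rw [hu]
    rw [map_add, map_smul, map_smul, smul_eq_mul, smul_eq_mul]
  -- mean value theorem along the segment
  have mvt : ∀ w : ℝ × ℝ, ∃ p ∈ D,
      fderiv ℝ χ pt1 w - fderiv ℝ χ pt w =
        (pt1.1 - pt.1) * fderiv ℝ (fun q => fderiv ℝ χ q w) p (1, 0) +
        (pt1.2 - pt.2) * fderiv ℝ (fun q => fderiv ℝ χ q w) p (0, 1) := by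
    intro w
    have hFd : ∀ x ∈ D, DifferentiableAt ℝ (fun q => fderiv ℝ χ q w) x := fun x hx =>
      (hd' x hx).clm_apply (differentiableAt_const w)
    set F : ℝ × ℝ → ℝ := fun q => fderiv ℝ χ q w with hF
    set v : ℝ × ℝ := pt1 - pt with hv
    set L : ℝ → ℝ × ℝ := fun t => pt + t • v with hL
    have hLD : ∀ t ∈ Icc (0:ℝ) 1, L t ∈ D := by
      intro t ht
      have hseg : L t ∈ segment ℝ pt pt1 := by
        rw [segment_eq_image']
        exact mem_image_of_mem _ ht
      exact hDc.segment_subset hpt hpt1 hseg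
    have hLd : ∀ t : ℝ, HasDerivAt L v t := by
      intro t
      simpa [hL] using ((hasDerivAt_id t).smul_const v).const_add pt
    have hψd : ∀ t ∈ Icc (0:ℝ) 1, HasDerivAt (F ∘ L) (fderiv ℝ F (L t) v) t := fun t ht =>
      (hFd _ (hLD t ht)).hasFDerivAt.comp_hasDerivAt t (hLd t)
    have hcont : ContinuousOn (F ∘ L) (Icc 0 1) := fun t ht =>
      (hψd t ht).continuousAt.continuousWithinAt
    obtain ⟨c, hc, hceq⟩ := exists_hasDerivAt_eq_slope (F ∘ L)
      (fun t => fderiv ℝ F (L t) v) zero_lt_one hcont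
      (fun t ht => hψd t (Ioo_subset_Icc_self ht))
    refine ⟨L c, hLD c (Ioo_subset_Icc_self hc), ?_⟩
    have hL0 : L 0 = pt := by simp [hL]
    have hL1 : L 1 = pt1 := by simp [hL, hv]
    simp only [Function.comp_apply, hL0, hL1, sub_zero, div_one] at hceq
    have hv1 : v.1 = pt1.1 - pt.1 := rfl
    have hv2 : v.2 = pt1.2 - pt.2 := rfl
    rw [show fderiv ℝ χ pt1 w - fderiv ℝ χ pt w = F pt1 - F pt from rfl, ← hceq,
      hdec (fderiv ℝ F (L c)) v, hv1, hv2]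
  -- strict gradient monotonicity between pt and pt1
  have hne : pt ≠ pt1 := by
    intro h
    rw [h] at hν
    exact lt_irrefl _ hν
  have hM0 := aux_grad_mono hD hDc hχ hconv pt hpt pt1 hpt1 hne
  rw [hdec (fderiv ℝ χ pt) (pt1 - pt), hdec (fderiv ℝ χ pt1) (pt1 - pt)] at hM0
  have hv1 : (pt1 - pt).1 = pt1.1 - pt.1 := rfl
  have hv2 : (pt1 - pt).2 = pt1.2 - pt.2 := rfl
  rw [hv1, hv2] at hM0
  have hM : 0 < (pt1.1 - pt.1) * (fderiv ℝ χ pt1 (1,0) - fderiv ℝ χ pt (1,0)) +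
      (pt1.2 - pt.2) * (fderiv ℝ χ pt1 (0,1) - fderiv ℝ χ pt (0,1)) := by nlinarith [hM0]
  obtain ⟨p₁, hp₁, hF⟩ := mvt (1, 0)
  obtain ⟨p₂, hp₂, hG⟩ := mvt (0, 1)
  have h11n : 0 ≤ fderiv ℝ (fun q => fderiv ℝ χ q ((1:ℝ), (0:ℝ))) p₁ (1, 0) :=
    aux_Hdiag hD hDc hχ hconv _ hp₁
  have h12p : 0 < fderiv ℝ (fun q => fderiv ℝ χ q ((1:ℝ), (0:ℝ))) p₁ (0, 1) := hcross p₁ hp₁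
  have h21p : 0 < fderiv ℝ (fun q => fderiv ℝ χ q ((0:ℝ), (1:ℝ))) p₂ (1, 0) := by
    rw [aux_symm hD hχ hp₂]
    exact hcross p₂ hp₂
  have h22n : 0 ≤ fderiv ℝ (fun q => fderiv ℝ χ q ((0:ℝ), (1:ℝ))) p₂ (0, 1) :=
    aux_Hdiag hD hDc hχ hconv _ hp₂
  have hkey := aux_final (a := pt1.1 - pt.1) (b := pt1.2 - pt.2)
    (sub_pos.2 hν) (sub_neg.2 hΔ) hM hF hG h11n h12p h21p h22n
  exact ⟨sub_pos.1 hkey.1, sub_neg.1 hkey.2⟩
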